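/- Let g = g₁⊗⋯⊗gₙ be a product operator on H_n with all gᵢ invertible, and let ψ ∈ H_n be such that φ = gψ is normalized. Then there exist complex 2×2 matrices A₁,…,Aₙ with Aₖ†Aₖ ≤ I₂ (in the positive semidefinite order) for every k, such that (A₁⊗⋯⊗Aₙ)ψ = λ_max(g†g)^{−1/2} φ; in particular ‖(A₁⊗⋯⊗Aₙ)ψ‖² = 1/λ_max(g†g), so the conversion of ψ into φ succeeds by local measurements with probability 1/λ_max(g†g). -/

import Mathlib

open scoped BigOperators Matrix
open MeasureTheory

noncomputable section

/-- The Hilbert space of `n` qubits, identified with `ℂ^(2^n)` via the computational basis: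
states are functions on bit strings. -/
abbrev QubitState (n : ℕ) := (Fin n → Fin 2) → ℂ

/-- Action of the product operator `g 0 ⊗ ⋯ ⊗ g (n-1)` on an `n`-qubit state,
in the computational basis. -/
def prodOp {n : ℕ} (g : Fin n → Matrix (Fin 2) (Fin 2) ℂ) (ψ : QubitState n) : QubitState n :=
  fun x => ∑ y : Fin n → Fin 2, (∏ i, g i (x i) (y i)) * ψ y

/-- The standard Hermitian inner product on `n`-qubit states. -/
def qInner {n : ℕ} (ψ φ : QubitState n) : ℂ := ∑ x, (starRingEnd ℂ) (ψ x) * φ x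

/-- The squared Euclidean norm of an `n`-qubit state. -/
def qNormSq {n : ℕ} (ψ : QubitState n) : ℝ := ∑ x, Complex.normSq (ψ x)

/-- The matrix (in the computational basis) of the product operator `g₁ ⊗ ⋯ ⊗ gₙ`. -/
def prodMatrix {n : ℕ} (g : Fin n → Matrix (Fin 2) (Fin 2) ℂ) :
    Matrix (Fin n → Fin 2) (Fin n → Fin 2) ℂ :=
  Matrix.of fun x y => ∏ i, g i (x i) (y i)

/-- The largest eigenvalue `λ_max(A†A)` of the positive semidefinite matrix `A†A`,
characterized as the supremum of `‖Av‖²` over unit vectors `v`. -/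
def lambdaMaxGram {m : Type*} [Fintype m] (A : Matrix m m ℂ) : ℝ :=
  sSup {r : ℝ | ∃ v : m → ℂ, (∑ i, Complex.normSq (v i)) = 1 ∧
    r = ∑ i, Complex.normSq (A.mulVec v i)}

namespace ConvAux

lemma sumNormSq_nonneg {m : Type*} [Fintype m] (v : m → ℂ) :
    0 ≤ ∑ i, Complex.normSq (v i) :=
  Finset.sum_nonneg fun _ _ => Complex.normSq_nonneg _

lemma bddAbove_gramSet {m : Type*} [Fintype m] (A : Matrix m m ℂ) :
    BddAbove {r : ℝ | ∃ v : m → ℂ, (∑ i, Complex.normSq (v i)) = 1 ∧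
      r = ∑ i, Complex.normSq (A.mulVec v i)} := by
  refine ⟨∑ x, ∑ y, Complex.normSq (A x y), ?_⟩
  rintro r ⟨v, hv, rfl⟩
  refine Finset.sum_le_sum fun x _ => ?_
  have h1 : ‖A.mulVec v x‖ ≤ ∑ y, ‖A x y‖ * ‖v y‖ := by
    rw [Matrix.mulVec, dotProduct]
    refine (norm_sum_le _ _).trans ?_
    simp [map_mul]
  have h2 : (∑ y, ‖A x y‖ * ‖v y‖) ^ 2
      ≤ (∑ y, ‖A x y‖ ^ 2) * ∑ y, ‖v y‖ ^ 2 :=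
    Finset.sum_mul_sq_le_sq_mul_sq _ _ _
  have h3 : Complex.normSq (A.mulVec v x) ≤ (∑ y, ‖A x y‖ ^ 2) * ∑ y, ‖v y‖ ^ 2 := by
    rw [← Complex.sq_norm]
    refine le_trans ?_ h2
    have := norm_nonneg (A.mulVec v x)
    nlinarith [h1, Finset.sum_nonneg (fun y (_ : y ∈ Finset.univ) =>
      mul_nonneg (norm_nonneg (A x y)) (norm_nonneg (v y)))]
  simpa [Complex.sq_norm, hv] using h3

lemma le_lambdaMaxGram {m : Type*} [Fintype m] (A : Matrix m m ℂ) (v : m → ℂ)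
    (hv : (∑ i, Complex.normSq (v i)) = 1) :
    (∑ i, Complex.normSq (A.mulVec v i)) ≤ lambdaMaxGram A :=
  le_csSup (bddAbove_gramSet A) ⟨v, hv, rfl⟩

lemma sumNormSq_smul {m : Type*} [Fintype m] (c : ℝ) (v : m → ℂ) :
    (∑ i, Complex.normSq (((c : ℂ) • v) i)) = c ^ 2 * ∑ i, Complex.normSq (v i) := by
  simp [Complex.normSq_mul, Complex.normSq_ofReal, Finset.mul_sum, sq]

lemma mulVec_normSq_le {m : Type*} [Fintype m] (A : Matrix m m ℂ) (v : m → ℂ) :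
    (∑ i, Complex.normSq (A.mulVec v i)) ≤ lambdaMaxGram A * ∑ i, Complex.normSq (v i) := by
  set s := ∑ i, Complex.normSq (v i) with hs
  rcases eq_or_lt_of_le (sumNormSq_nonneg v) with h0 | hpos
  · have hv0 : v = 0 := by
      funext i
      have : Complex.normSq (v i) = 0 := by
        have := Finset.sum_eq_zero_iff_of_nonneg
          (fun j (_ : j ∈ Finset.univ) => Complex.normSq_nonneg (v j)) |>.mp h0.symm
        exact this i (Finset.mem_univ i)
      simpa [Complex.normSq_eq_zero] using this
    have hs0 : s = 0 := h0.symm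
    have hlam0 : (∑ i, Complex.normSq (A.mulVec v i)) = 0 := by
      simp [hv0, Matrix.mulVec_zero]
    rw [hlam0, hs0, mul_zero]
  · set c : ℝ := (Real.sqrt s)⁻¹ with hc
    have hsqrt : Real.sqrt s ≠ 0 := by positivity
    have hc2 : c ^ 2 = s⁻¹ := by
      rw [hc, inv_pow, Real.sq_sqrt hpos.le]
    have hw : (∑ i, Complex.normSq (((c : ℂ) • v) i)) = 1 := by
      rw [sumNormSq_smul, hc2]
      rw [← hs]; exact inv_mul_cancel₀ (show s ≠ 0 from hpos.ne')
    have hb := le_lambdaMaxGram A ((c : ℂ) • v) hw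
    rw [Matrix.mulVec_smul] at hb
    rw [sumNormSq_smul, hc2] at hb
    calc (∑ i, Complex.normSq (A.mulVec v i))
        = s * (s⁻¹ * ∑ i, Complex.normSq (A.mulVec v i)) := by
          rw [← mul_assoc, mul_inv_cancel₀ (show s ≠ 0 from hpos.ne'), one_mul]
      _ ≤ s * lambdaMaxGram A := mul_le_mul_of_nonneg_left hb hpos.le
      _ = lambdaMaxGram A * s := mul_comm _ _

lemma exists_gram_max {m : Type*} [Fintype m] [DecidableEq m] [Nonempty m] (A : Matrix m m ℂ) :
    ∃ v : m → ℂ, (∑ i, Complex.normSq (v i)) = 1 ∧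
      (∑ i, Complex.normSq (A.mulVec v i)) = lambdaMaxGram A := by
  set f : (m → ℂ) → ℝ := fun v => ∑ i, Complex.normSq (v i) with hf
  set φ : (m → ℂ) → ℝ := fun v => ∑ i, Complex.normSq (A.mulVec v i) with hφ
  have hfc : Continuous f := by
    apply continuous_finset_sum
    exact fun i _ => Complex.continuous_normSq.comp (continuous_apply i)
  have hφc : Continuous φ := by
    apply continuous_finset_sum
    intro i _
    refine Complex.continuous_normSq.comp ?_
    simp only [Matrix.mulVec, dotProduct]
    exact continuous_finset_sum _ fun j _ => continuous_const.mul (continuous_apply j)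
  set K : Set (m → ℂ) := f ⁻¹' {1} with hK
  have hKc : IsClosed K := isClosed_singleton.preimage hfc
  have hKsub : K ⊆ Metric.closedBall 0 1 := by
    intro v hv
    simp only [Metric.mem_closedBall, dist_zero_right]
    rw [pi_norm_le_iff_of_nonneg zero_le_one]
    intro i
    have h1 : Complex.normSq (v i) ≤ 1 := by
      have : f v = 1 := hv
      rw [hf] at this
      calc Complex.normSq (v i)
          ≤ ∑ j, Complex.normSq (v j) :=
            Finset.single_le_sum (fun j _ => Complex.normSq_nonneg (v j)) (Finset.mem_univ i)
        _ = 1 := this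
    rw [← Complex.sq_norm] at h1
    nlinarith [norm_nonneg (v i), h1]
  have hKcompact : IsCompact K :=
    (isCompact_closedBall (0 : m → ℂ) 1).of_isClosed_subset hKc hKsub
  have hKne : K.Nonempty := by
    refine ⟨Pi.single (Classical.arbitrary m) 1, ?_⟩
    show f _ = 1
    rw [hf]
    simp [Pi.single_apply, apply_ite Complex.normSq]
  have hset : {r : ℝ | ∃ v : m → ℂ, (∑ i, Complex.normSq (v i)) = 1 ∧
      r = ∑ i, Complex.normSq (A.mulVec v i)} = φ '' K := by
    ext r
    constructor
    · rintro ⟨v, hv, rfl⟩; exact ⟨v, hv, rfl⟩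
    · rintro ⟨v, hv, rfl⟩; exact ⟨v, hv, rfl⟩
  have hcomp : IsCompact (φ '' K) := hKcompact.image hφc
  have hmem : sSup (φ '' K) ∈ φ '' K := hcomp.sSup_mem (hKne.image φ)
  rw [lambdaMaxGram, hset]
  rcases hmem with ⟨v, hv, hveq⟩
  exact ⟨v, hv, hveq⟩

lemma prodOp_eq_mulVec {n : ℕ} (g : Fin n → Matrix (Fin 2) (Fin 2) ℂ) (ψ : QubitState n) :
    prodOp g ψ = (prodMatrix g).mulVec ψ := by
  funext x
  simp [prodOp, prodMatrix, Matrix.mulVec, dotProduct]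

lemma tensor_sumNormSq {n : ℕ} (v : Fin n → Fin 2 → ℂ) :
    ∑ x : Fin n → Fin 2, Complex.normSq (∏ i, v i (x i))
      = ∏ i, ∑ j, Complex.normSq (v i j) := by
  rw [Finset.prod_univ_sum]
  rw [Fintype.piFinset_univ]
  refine Finset.sum_congr rfl fun x _ => ?_
  exact map_prod Complex.normSq (fun i => v i (x i)) Finset.univ

lemma tensor_mulVec {n : ℕ} (g : Fin n → Matrix (Fin 2) (Fin 2) ℂ) (v : Fin n → Fin 2 → ℂ) :
    (prodMatrix g).mulVec (fun y => ∏ i, v i (y i))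
      = fun x => ∏ i, (g i).mulVec (v i) (x i) := by
  funext x
  simp only [Matrix.mulVec, dotProduct, prodMatrix, Matrix.of_apply]
  rw [show (∏ i, ∑ j, g i (x i) j * v i j) = _ from Finset.prod_univ_sum _ _]
  rw [Fintype.piFinset_univ]
  refine Finset.sum_congr rfl fun y _ => ?_
  rw [← Finset.prod_mul_distrib]

lemma prodOp_smul {n : ℕ} (c : Fin n → ℝ) (g : Fin n → Matrix (Fin 2) (Fin 2) ℂ)
    (ψ : QubitState n) :
    prodOp (fun i => ((c i : ℝ) : ℂ) • g i) ψ = ((↑(∏ i, c i) : ℂ)) • prodOp g ψ := by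
  funext x
  simp only [prodOp, Pi.smul_apply, smul_eq_mul, Complex.ofReal_prod, Finset.mul_sum]
  refine Finset.sum_congr rfl fun y _ => ?_
  rw [← mul_assoc]
  congr 1
  rw [← Finset.prod_mul_distrib]
  refine Finset.prod_congr rfl fun i _ => ?_
  simp [Matrix.smul_apply]

lemma contraction_of_sq_le (B : Matrix (Fin 2) (Fin 2) ℂ) (c : ℝ)
    (h : c ^ 2 * lambdaMaxGram B ≤ 1) (v : Fin 2 → ℂ) :
    (∑ i, Complex.normSq ((((c : ℂ) • B)).mulVec v i)) ≤ ∑ i, Complex.normSq (v i) := by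
  rw [Matrix.smul_mulVec, sumNormSq_smul]
  have h1 := mulVec_normSq_le B v
  have hs := sumNormSq_nonneg v
  nlinarith [mul_le_mul_of_nonneg_left h1 (sq_nonneg c), mul_le_mul_of_nonneg_right h hs]

lemma qNormSq_ofReal_smul {n : ℕ} (c : ℝ) (φ : QubitState n) :
    qNormSq (((c : ℝ) : ℂ) • φ) = c ^ 2 * qNormSq φ := by
  simpa [qNormSq] using sumNormSq_smul c φ

lemma lambdaMaxGram_pos_of_isUnit (B : Matrix (Fin 2) (Fin 2) ℂ) (hB : IsUnit B) :
    0 < lambdaMaxGram B := by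
  obtain ⟨u, hu⟩ := hB
  set e : Fin 2 → ℂ := Pi.single 0 1 with he
  have he1 : (∑ j, Complex.normSq (e j)) = 1 := by
    simp [he, Pi.single_apply, apply_ite Complex.normSq]
  have hne : B.mulVec e ≠ 0 := by
    intro h
    have h2 : (↑u⁻¹ : Matrix (Fin 2) (Fin 2) ℂ).mulVec (B.mulVec e) = e := by
      rw [Matrix.mulVec_mulVec, ← hu, u.inv_mul, Matrix.one_mulVec]
    rw [h, Matrix.mulVec_zero] at h2
    have : e 0 = 1 := by simp [he]
    rw [← h2] at this
    simp at this
  have hex : ∃ j, Complex.normSq (B.mulVec e j) ≠ 0 := by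
    by_contra hcon
    push_neg at hcon
    apply hne
    funext j
    simpa [Complex.normSq_eq_zero] using hcon j
  obtain ⟨j, hj⟩ := hex
  have hpos : 0 < ∑ i, Complex.normSq (B.mulVec e i) :=
    Finset.sum_pos' (fun i _ => Complex.normSq_nonneg _)
      ⟨j, Finset.mem_univ j, lt_of_le_of_ne (Complex.normSq_nonneg _) (Ne.symm hj)⟩
  exact lt_of_lt_of_le hpos (le_lambdaMaxGram B e he1)

end ConvAux

open ConvAux in
/-- Achievability of the conversion probability `1/λ_max(g†g)`: if `φ = gψ` is normalized
(`g` a product operator with invertible factors), then there are local measurement operators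
`A₁, …, Aₙ` with `Aₖ†Aₖ ≤ I₂` such that `(A₁ ⊗ ⋯ ⊗ Aₙ)ψ = λ_max(g†g)^{-1/2} φ`; in
particular `‖(A₁ ⊗ ⋯ ⊗ Aₙ)ψ‖² = 1/λ_max(g†g)`. -/
theorem conversion_probability_achievable (n : ℕ)
    (g : Fin n → Matrix (Fin 2) (Fin 2) ℂ) (hg : ∀ i, IsUnit (g i))
    (ψ : QubitState n) (hφnorm : qInner (prodOp g ψ) (prodOp g ψ) = 1) :
    ∃ A : Fin n → Matrix (Fin 2) (Fin 2) ℂ,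
      (∀ (k : Fin n) (v : Fin 2 → ℂ),
        (∑ i, Complex.normSq ((A k).mulVec v i)) ≤ ∑ i, Complex.normSq (v i)) ∧
      prodOp A ψ
        = (((Real.sqrt (lambdaMaxGram (prodMatrix g)))⁻¹ : ℝ) : ℂ) • prodOp g ψ ∧
      qNormSq (prodOp A ψ) = 1 / lambdaMaxGram (prodMatrix g) := by
  classical
  -- the output state is normalized
  have hφ : qNormSq (prodOp g ψ) = 1 := by
    have h1 : (↑(qNormSq (prodOp g ψ)) : ℂ) = 1 := by
      rw [← hφnorm, qInner, qNormSq, Complex.ofReal_sum]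
      refine Finset.sum_congr rfl fun x _ => ?_
      rw [Complex.normSq_eq_conj_mul_self]
    exact_mod_cast h1
  -- positivity of lambda
  have hψpos : 0 < ∑ x, Complex.normSq (ψ x) := by
    rcases eq_or_lt_of_le (sumNormSq_nonneg ψ) with h0 | h
    · exfalso
      have hψ0 : ψ = 0 := by
        funext x
        have := Finset.sum_eq_zero_iff_of_nonneg
          (fun j (_ : j ∈ Finset.univ) => Complex.normSq_nonneg (ψ j)) |>.mp h0.symm
        simpa [Complex.normSq_eq_zero] using this x (Finset.mem_univ x)
      rw [hψ0] at hφ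
      simp [qNormSq, prodOp] at hφ
    · exact h
  have hlampos : 0 < lambdaMaxGram (prodMatrix g) := by
    set s := ∑ x, Complex.normSq (ψ x) with hs
    set c : ℝ := (Real.sqrt s)⁻¹ with hc
    have hsqrt : Real.sqrt s ≠ 0 := by positivity
    have hc2 : c ^ 2 = s⁻¹ := by rw [hc, inv_pow, Real.sq_sqrt hψpos.le]
    have hw : (∑ x, Complex.normSq (((c : ℂ) • ψ) x)) = 1 := by
      rw [sumNormSq_smul, hc2, ← hs]
      field_simp
    have hb := le_lambdaMaxGram (prodMatrix g) ((c : ℂ) • ψ) hw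
    rw [Matrix.mulVec_smul, sumNormSq_smul, hc2] at hb
    have hφ1 : (∑ x, Complex.normSq ((prodMatrix g).mulVec ψ x)) = 1 := by
      rw [← prodOp_eq_mulVec]; exact hφ
    rw [hφ1, mul_one] at hb
    exact lt_of_lt_of_le (by positivity) hb
  -- product of single-site lambdas is at most lambda
  have hprodle : (∏ i, lambdaMaxGram (g i)) ≤ lambdaMaxGram (prodMatrix g) := by
    have hach : ∀ i, ∃ v : Fin 2 → ℂ, (∑ j, Complex.normSq (v j)) = 1 ∧
        (∑ j, Complex.normSq ((g i).mulVec v j)) = lambdaMaxGram (g i) :=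
      fun i => exists_gram_max (g i)
    choose v hv1 hv2 using hach
    have hw1 : (∑ x : Fin n → Fin 2, Complex.normSq ((fun y => ∏ i, v i (y i)) x)) = 1 := by
      rw [tensor_sumNormSq]
      simp [hv1]
    have hb := le_lambdaMaxGram (prodMatrix g) (fun y => ∏ i, v i (y i)) hw1
    rw [tensor_mulVec] at hb
    have : (∑ x : Fin n → Fin 2, Complex.normSq (∏ i, (g i).mulVec (v i) (x i)))
        = ∏ i, lambdaMaxGram (g i) := by
      rw [tensor_sumNormSq]
      exact Finset.prod_congr rfl fun i _ => hv2 i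
    rwa [this] at hb
  rcases Nat.eq_zero_or_pos n with hn | hn
  · -- n = 0
    subst hn
    set d : Fin 0 → Fin 2 := fun a => a.elim0 with hdd
    have huniv : (Finset.univ : Finset (Fin 0 → Fin 2)) = {d} :=
      Finset.eq_singleton_iff_unique_mem.mpr
        ⟨Finset.mem_univ d, fun x _ => Subsingleton.elim x d⟩
    have hmv : ∀ (w : QubitState 0) (x : Fin 0 → Fin 2), (prodMatrix g).mulVec w x = w d := by
      intro w x
      simp [prodMatrix, Matrix.mulVec, dotProduct, huniv]
      exact congrArg w (Subsingleton.elim _ _)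
    have hlam1 : lambdaMaxGram (prodMatrix g) = 1 := by
      refine le_antisymm ?_ ?_
      · refine csSup_le ?_ ?_
        · exact ⟨1, fun _ => 1, by simp [huniv], by simp [hmv, huniv]⟩
        · rintro r ⟨w, hw, rfl⟩
          rw [huniv, Finset.sum_singleton] at hw ⊢
          rw [hmv w d, hw]
      · simpa using hprodle
    refine ⟨g, fun k => k.elim0, ?_, ?_⟩
    · rw [hlam1]
      simp
    · rw [hlam1, hφ]
      norm_num
  · -- n > 0
    set lam := lambdaMaxGram (prodMatrix g) with hlamdef
    set i0 : Fin n := ⟨0, hn⟩ with hi0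
    set c : Fin n → ℝ := fun i =>
      if i = i0 then (Real.sqrt lam)⁻¹ * ∏ j ∈ Finset.univ.erase i0, Real.sqrt (lambdaMaxGram (g j))
      else (Real.sqrt (lambdaMaxGram (g i)))⁻¹ with hcdef
    have hlamipos : ∀ i, 0 < lambdaMaxGram (g i) := fun i => lambdaMaxGram_pos_of_isUnit (g i) (hg i)
    have hsqrtne : ∀ i, Real.sqrt (lambdaMaxGram (g i)) ≠ 0 := fun i => by
      have := hlamipos i; positivity
    have hlamsqrtne : Real.sqrt lam ≠ 0 := by positivity
    -- key: product of c equals (sqrt lam)⁻¹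
    have hcprod : (∏ i, c i) = (Real.sqrt lam)⁻¹ := by
      rw [← Finset.mul_prod_erase Finset.univ c (Finset.mem_univ i0)]
      have h1 : c i0 = (Real.sqrt lam)⁻¹ * ∏ j ∈ Finset.univ.erase i0, Real.sqrt (lambdaMaxGram (g j)) := by
        simp [hcdef]
      have h2 : (∏ j ∈ Finset.univ.erase i0, c j)
          = ∏ j ∈ Finset.univ.erase i0, (Real.sqrt (lambdaMaxGram (g j)))⁻¹ := by
        refine Finset.prod_congr rfl fun j hj => ?_
        have : j ≠ i0 := Finset.ne_of_mem_erase hj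
        simp [hcdef, this]
      rw [h1, h2, mul_assoc, ← Finset.prod_mul_distrib]
      have : (∏ j ∈ Finset.univ.erase i0,
          Real.sqrt (lambdaMaxGram (g j)) * (Real.sqrt (lambdaMaxGram (g j)))⁻¹) = 1 := by
        refine Finset.prod_eq_one fun j _ => mul_inv_cancel₀ (hsqrtne j)
      rw [this, mul_one]
    -- contraction bound for each factor
    have hcontr : ∀ i, (c i) ^ 2 * lambdaMaxGram (g i) ≤ 1 := by
      intro i
      by_cases hi : i = i0
      · have hci : c i = (Real.sqrt lam)⁻¹ * ∏ j ∈ Finset.univ.erase i0, Real.sqrt (lambdaMaxGram (g j)) := by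
          simp [hcdef, hi]
        rw [hci, mul_pow, inv_pow, Real.sq_sqrt hlampos.le]
        have hprodpow : (∏ j ∈ Finset.univ.erase i0, Real.sqrt (lambdaMaxGram (g j))) ^ 2
            = ∏ j ∈ Finset.univ.erase i0, lambdaMaxGram (g j) := by
          rw [← Finset.prod_pow]
          exact Finset.prod_congr rfl fun j _ => Real.sq_sqrt (hlamipos j).le
        rw [hprodpow]
        have hall : lambdaMaxGram (g i0) * ∏ j ∈ Finset.univ.erase i0, lambdaMaxGram (g j)
            = ∏ j, lambdaMaxGram (g j) :=
          Finset.mul_prod_erase Finset.univ (fun j => lambdaMaxGram (g j)) (Finset.mem_univ i0)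
        calc lam⁻¹ * (∏ j ∈ Finset.univ.erase i0, lambdaMaxGram (g j)) * lambdaMaxGram (g i)
            = lam⁻¹ * (∏ j, lambdaMaxGram (g j)) := by rw [hi, ← hall]; ring
          _ ≤ lam⁻¹ * lam := mul_le_mul_of_nonneg_left hprodle (by positivity)
          _ = 1 := inv_mul_cancel₀ (ne_of_gt hlampos)
      · have hci : c i = (Real.sqrt (lambdaMaxGram (g i)))⁻¹ := by simp [hcdef, hi]
        rw [hci, inv_pow, Real.sq_sqrt (hlamipos i).le]
        rw [inv_mul_cancel₀ (ne_of_gt (hlamipos i))]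
    refine ⟨fun i => ((c i : ℝ) : ℂ) • g i, ?_, ?_, ?_⟩
    · intro k w
      exact contraction_of_sq_le (g k) (c k) (hcontr k) w
    · rw [prodOp_smul, hcprod]
    · rw [prodOp_smul, hcprod, qNormSq_ofReal_smul, hφ, mul_one, inv_pow,
        Real.sq_sqrt hlampos.le, one_div]
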